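/- One-period superhedging duality on a finite space: let S_0 ∈ ℝ^d with S_0 ∈ ri(conv{S_1(ω)}) (no arbitrage), and let f be a real random variable (contingent claim). Then the upper price π̄ = inf{x ∈ ℝ : ∃ γ ∈ ℝ^d, x + ⟨γ, S_1 − S_0⟩ ≥ f a.s.} equals sup{y : (S_0, y) ∈ ri(conv{(S_1(ω), f(ω)) : ω ∈ Ω})}. -/

import Mathlib

open Finset Pointwise RealInnerProductSpace

noncomputable section

abbrev E (d : ℕ) : Type := EuclideanSpace ℝ (Fin d)


lemma lemA {Ω : Type} [Fintype Ω] [Nonempty Ω] {F : Type*} [AddCommGroup F] [Module ℝ F]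
    (p : Ω → F) (x : F) :
    x ∈ convexHull ℝ (Set.range p) ↔
      ∃ l : Ω → ℝ, (∀ ω, 0 ≤ l ω) ∧ ∑ ω, l ω = 1 ∧ ∑ ω, l ω • p ω = x := by
  classical
  rw [convexHull_range_eq_exists_affineCombination]
  constructor
  · rintro ⟨s, w, hw0, hw1, rfl⟩
    refine ⟨fun ω => if ω ∈ s then w ω else 0,
      fun ω => by by_cases h : ω ∈ s <;> simp_all [hw0], ?_, ?_⟩
    · rw [Finset.sum_ite_mem, Finset.univ_inter, hw1]
    · rw [Finset.affineCombination_eq_linear_combination s p w hw1]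
      rw [← Finset.sum_subset (Finset.subset_univ s)]
      · exact Finset.sum_congr rfl fun ω hω => by simp [hω]
      · intro ω _ hω; simp [hω]
  · rintro ⟨l, hl0, hl1, rfl⟩
    exact ⟨Finset.univ, l, fun ω _ => hl0 ω, hl1,
      Finset.affineCombination_eq_linear_combination _ p l hl1⟩

set_option maxHeartbeats 1000000 in
set_option synthInstance.maxHeartbeats 200000 in
lemma lemB {Ω : Type} [Fintype Ω] [Nonempty Ω] {F : Type*} [NormedAddCommGroup F]
    [NormedSpace ℝ F] [FiniteDimensional ℝ F]
    (p : Ω → F) (l : Ω → ℝ) (hl : ∀ ω, 0 < l ω) (hl1 : ∑ ω, l ω = 1) :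
    ∑ ω, l ω • p ω ∈ intrinsicInterior ℝ (convexHull ℝ (Set.range p)) := by
  classical
  obtain ⟨q, hq⟩ : ∃ q : F, q = ∑ ω, l ω • p ω := ⟨_, rfl⟩
  rw [← hq]
  have hqc : q ∈ convexHull ℝ (Set.range p) :=
    (lemA p q).2 ⟨l, fun ω => (hl ω).le, hl1, hq.symm⟩
  have hqs : q ∈ affineSpan ℝ (convexHull ℝ (Set.range p)) :=
    subset_affineSpan ℝ _ hqc
  have hqs' : q ∈ affineSpan ℝ (Set.range p) := by
    rwa [affineSpan_convexHull] at hqs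
  obtain ⟨v, hv⟩ : ∃ v : Ω → F, v = fun ω => p ω - q := ⟨_, rfl⟩
  obtain ⟨L, hL⟩ : ∃ L : (Ω → ℝ) →ₗ[ℝ] F, L = Fintype.linearCombination ℝ v := ⟨_, rfl⟩
  obtain ⟨M, hM⟩ : ∃ M : Submodule ℝ F, M = Submodule.span ℝ (Set.range v) := ⟨_, rfl⟩
  have hdir : ∀ z, z ∈ affineSpan ℝ (convexHull ℝ (Set.range p)) → z - q ∈ M := by
    intro z hz
    rw [affineSpan_convexHull] at hz
    have h1 : z - q ∈ (affineSpan ℝ (Set.range p)).direction := by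
      simpa using AffineSubspace.vsub_mem_direction hz hqs'
    rw [direction_affineSpan, vectorSpan_def] at h1
    refine Submodule.span_le.2 ?_ h1
    rintro x ⟨a, ⟨ωa, rfl⟩, b, ⟨ωb, rfl⟩, rfl⟩
    simp only [vsub_eq_sub]
    have hab : p ωa - p ωb = v ωa - v ωb := by simp [hv]
    rw [hab]
    rw [hM]
    exact sub_mem (Submodule.subset_span ⟨ωa, rfl⟩) (Submodule.subset_span ⟨ωb, rfl⟩)
  have hrange : LinearMap.range L = M := by
    rw [hL, Fintype.range_linearCombination, hM]
  obtain ⟨L', hL'⟩ : ∃ L' : (Ω → ℝ) →ₗ[ℝ] M,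
      L' = L.codRestrict M (fun c => hrange ▸ LinearMap.mem_range_self L c) := ⟨_, rfl⟩
  have hsurj : LinearMap.range L' = ⊤ := by
    rw [LinearMap.range_eq_top]
    rintro ⟨x, hx⟩
    rw [← hrange] at hx
    obtain ⟨c, hc⟩ := hx
    exact ⟨c, Subtype.ext (by simp [hL', LinearMap.codRestrict, hc])⟩
  obtain ⟨T, hT⟩ := L'.exists_rightInverse_of_surjective hsurj
  have hLT : ∀ x : M, L (T x) = (x : F) := by
    intro x
    have h := congrArg (fun g => ((g x : M) : F)) hT
    simpa [hL', LinearMap.codRestrict] using h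
  have hTcont : Continuous T := T.continuous_of_finiteDimensional
  obtain ⟨C, hCpos, hCb⟩ : ∃ C : ℝ, 0 < C ∧ ∀ x : M, ‖T x‖ ≤ C * ‖x‖ := by
    obtain ⟨C, hC1, hC2⟩ := (⟨T, hTcont⟩ : M →L[ℝ] (Ω → ℝ)).bound
    exact ⟨C, hC1, hC2⟩
  obtain ⟨m, hm⟩ : ∃ m : ℝ, m = Finset.univ.inf' Finset.univ_nonempty l := ⟨_, rfl⟩
  have hmpos : 0 < m := by
    rw [hm, Finset.lt_inf'_iff]
    exact fun ω _ => hl ω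
  have hml : ∀ ω, m ≤ l ω := fun ω => hm ▸ Finset.inf'_le _ (Finset.mem_univ ω)
  obtain ⟨n, hn⟩ : ∃ n : ℕ, n = Fintype.card Ω := ⟨_, rfl⟩
  have hnpos : (0:ℝ) < n := by
    rw [hn]; exact_mod_cast Fintype.card_pos
  obtain ⟨δ, hδpos, hδm, hδn⟩ : ∃ δ : ℝ, 0 < δ ∧ δ ≤ m/4 ∧ δ ≤ 1/(4*n) :=
    ⟨min (m/4) (1/(4*n)), lt_min (by linarith) (by positivity), min_le_left _ _, min_le_right _ _⟩
  obtain ⟨ε, hε⟩ : ∃ ε : ℝ, ε = δ / C := ⟨_, rfl⟩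
  have hεpos : 0 < ε := hε ▸ div_pos hδpos hCpos
  have key : ∀ z, z ∈ affineSpan ℝ (convexHull ℝ (Set.range p)) → ‖z - q‖ < ε →
      z ∈ convexHull ℝ (Set.range p) := by
    intro z hz hznorm
    obtain ⟨c, hc⟩ : ∃ c : Ω → ℝ, c = T ⟨z - q, hdir z hz⟩ := ⟨_, rfl⟩
    have hLc : ∑ ω, c ω • v ω = z - q := by
      have h := hLT ⟨z - q, hdir z hz⟩
      rw [hL, Fintype.linearCombination_apply] at h
      rw [hc]; exact h
    have hcnorm : ‖c‖ < δ := by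
      have h1 : ‖c‖ ≤ C * ‖(⟨z - q, hdir z hz⟩ : M)‖ := hc ▸ hCb _
      have h2 : ‖(⟨z - q, hdir z hz⟩ : M)‖ = ‖z - q‖ := rfl
      rw [h2] at h1
      have h3 : C * ‖z - q‖ < C * ε := mul_lt_mul_of_pos_left hznorm hCpos
      have h4 : C * ε = δ := by rw [hε, mul_div_cancel₀]; exact ne_of_gt hCpos
      linarith
    have hcbound : ∀ ω, |c ω| < δ :=
      fun ω => lt_of_le_of_lt (norm_le_pi_norm c ω) hcnorm
    have hsumc : |∑ ω, c ω| ≤ n * δ := by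
      calc |∑ ω, c ω| ≤ ∑ ω, |c ω| := Finset.abs_sum_le_sum_abs _ _
        _ ≤ ∑ _ω : Ω, δ := Finset.sum_le_sum (fun ω _ => (hcbound ω).le)
        _ = n * δ := by rw [Finset.sum_const, Finset.card_univ, ← hn, nsmul_eq_mul]
    have hnδ : (n:ℝ) * δ ≤ 1/4 := by
      have h := mul_le_mul_of_nonneg_left hδn (le_of_lt hnpos)
      have h2 : (n:ℝ) * (1/(4*n)) = 1/4 := by field_simp
      linarith
    have hs1 : 1 - ∑ ω', c ω' ≥ 3/4 := by
      have := (abs_le.1 hsumc).2; linarith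
    refine (lemA p z).2 ⟨fun ω => l ω * (1 - ∑ ω', c ω') + c ω, ?_, ?_, ?_⟩
    · intro ω
      show 0 ≤ l ω * (1 - ∑ ω', c ω') + c ω
      have h2 : -δ ≤ c ω := (abs_le.1 (hcbound ω).le).1
      have h4 : m * (3/4) ≤ l ω * (1 - ∑ ω', c ω') :=
        mul_le_mul (hml ω) hs1 (by linarith) (le_trans hmpos.le (hml ω))
      linarith
    · rw [Finset.sum_add_distrib, ← Finset.sum_mul, hl1, one_mul]; ring
    · have expand : ∀ ω, (l ω * (1 - ∑ ω', c ω') + c ω) • p ω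
          = (1 - ∑ ω', c ω') • (l ω • p ω) + c ω • p ω := by
        intro ω
        rw [add_smul, mul_comm, mul_smul]
      rw [Finset.sum_congr rfl (fun ω _ => expand ω), Finset.sum_add_distrib,
        ← Finset.smul_sum, ← hq]
      have hvexp : ∑ ω, c ω • v ω = (∑ ω, c ω • p ω) - (∑ ω, c ω) • q := by
        rw [hv]
        simp only [smul_sub]
        rw [Finset.sum_sub_distrib, ← Finset.sum_smul]
      rw [hvexp] at hLc
      rw [sub_smul, one_smul]
      have hz' : ∑ ω, c ω • p ω = z - q + (∑ ω, c ω) • q := by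
        rw [← hLc]; abel
      rw [hz']
      abel
  rw [mem_intrinsicInterior]
  refine ⟨⟨q, hqs⟩, ?_, rfl⟩
  rw [mem_interior_iff_mem_nhds, Metric.mem_nhds_iff]
  refine ⟨ε, hεpos, ?_⟩
  rintro ⟨z, hz⟩ hball
  have hd : ‖z - q‖ < ε := by
    rw [Metric.mem_ball, Subtype.dist_eq, dist_eq_norm] at hball
    exact hball
  exact key z hz hd

lemma lemC {Ω : Type} [Fintype Ω] [Nonempty Ω] {F : Type*} [NormedAddCommGroup F]
    [NormedSpace ℝ F]
    (p : Ω → F) (x : F) (hx : x ∈ intrinsicInterior ℝ (convexHull ℝ (Set.range p))) :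
    ∃ l : Ω → ℝ, (∀ ω, 0 < l ω) ∧ ∑ ω, l ω = 1 ∧ ∑ ω, l ω • p ω = x := by
  classical
  obtain ⟨y, hy, hyx⟩ := mem_intrinsicInterior.1 hx
  rw [mem_interior_iff_mem_nhds, Metric.mem_nhds_iff] at hy
  obtain ⟨ε, hεpos, hball⟩ := hy
  obtain ⟨n, hn⟩ : ∃ n : ℕ, n = Fintype.card Ω := ⟨_, rfl⟩
  have hnpos : (0:ℝ) < n := by rw [hn]; exact_mod_cast Fintype.card_pos
  obtain ⟨b, hb⟩ : ∃ b : F, b = ∑ ω, ((n:ℝ)⁻¹) • p ω := ⟨_, rfl⟩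
  have hbconv : b ∈ convexHull ℝ (Set.range p) := by
    refine (lemA p b).2 ⟨fun _ => (n:ℝ)⁻¹, fun _ => by positivity, ?_, hb.symm⟩
    rw [Finset.sum_const, Finset.card_univ, ← hn, nsmul_eq_mul]
    field_simp
  have hxspan : x ∈ affineSpan ℝ (convexHull ℝ (Set.range p)) := hyx ▸ y.2
  have hbspan : b ∈ affineSpan ℝ (convexHull ℝ (Set.range p)) :=
    subset_affineSpan ℝ _ hbconv
  obtain ⟨t, htpos, htε⟩ : ∃ t : ℝ, 0 < t ∧ t * ‖x - b‖ < ε := by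
    refine ⟨ε / (2 * (‖x - b‖ + 1)), by positivity, ?_⟩
    rw [div_mul_eq_mul_div, div_lt_iff₀ (by positivity)]
    nlinarith [norm_nonneg (x - b), hεpos]
  obtain ⟨z, hz⟩ : ∃ z : F, z = x + t • (x - b) := ⟨_, rfl⟩
  have hzspan : z ∈ affineSpan ℝ (convexHull ℝ (Set.range p)) := by
    have h := AffineSubspace.smul_vsub_vadd_mem _ t hxspan hbspan hxspan
    simpa [hz, vsub_eq_sub, vadd_eq_add, add_comm] using h
  have hzconv : z ∈ convexHull ℝ (Set.range p) := by
    have hmem : (⟨z, hzspan⟩ : affineSpan ℝ (convexHull ℝ (Set.range p))) ∈ Metric.ball y ε := by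
      rw [Metric.mem_ball, Subtype.dist_eq, hyx, dist_eq_norm]
      have : z - x = t • (x - b) := by rw [hz]; abel
      rw [this, norm_smul, Real.norm_eq_abs, abs_of_pos htpos]
      exact htε
    exact hball hmem
  obtain ⟨ν, hν0, hν1, hνp⟩ := (lemA p z).1 hzconv
  have h1t : (0:ℝ) < 1 + t := by linarith
  refine ⟨fun ω => (ν ω + t * (n:ℝ)⁻¹) / (1 + t), ?_, ?_, ?_⟩
  · intro ω
    have : 0 < t * (n:ℝ)⁻¹ := by positivity
    have := hν0 ω
    positivity
  · rw [← Finset.sum_div, Finset.sum_add_distrib, hν1, Finset.sum_const, Finset.card_univ, ← hn,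
      nsmul_eq_mul]
    field_simp
  · have expand : ∀ ω, ((ν ω + t * (n:ℝ)⁻¹) / (1 + t)) • p ω
        = (1 + t)⁻¹ • (ν ω • p ω + t • ((n:ℝ)⁻¹ • p ω)) := by
      intro ω
      rw [div_eq_mul_inv, mul_comm, mul_smul, add_smul, mul_smul]
    rw [Finset.sum_congr rfl (fun ω _ => expand ω), ← Finset.smul_sum, Finset.sum_add_distrib,
      hνp, ← Finset.smul_sum, ← hb]
    have : z + t • b = (1 + t) • x := by
      rw [hz, add_smul, one_smul, smul_sub]; abel
    rw [this, smul_smul, inv_mul_cancel₀ (ne_of_gt h1t), one_smul]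

/-- one-period superhedging duality: under no arbitrage
(S_0 ∈ ri conv{S_1(ω)}), the upper price of a claim f equals
sup{y : (S_0, y) ∈ ri(conv{(S_1(ω), f(ω))})}. -/
theorem one_period_upper_price {Ω : Type} [Fintype Ω] [Nonempty Ω] {d : ℕ}
    (P : Ω → ℝ) (hP : ∀ ω, 0 < P ω) (hP1 : ∑ ω, P ω = 1)
    (S₀ : E d) (S₁ : Ω → E d)
    (hNA : S₀ ∈ intrinsicInterior ℝ (convexHull ℝ (Set.range S₁)))
    (f : Ω → ℝ) :
    sInf {x : ℝ | ∃ γ : E d, ∀ ω, f ω ≤ x + ⟪γ, S₁ ω - S₀⟫} =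
      sSup {y : ℝ | (S₀, y) ∈
        intrinsicInterior ℝ (convexHull ℝ (Set.range fun ω => (S₁ ω, f ω)))} := by
  classical
  obtain ⟨l, hl0, hl1, hlS⟩ := lemC S₁ S₀ hNA
  set X : Set ℝ := {x : ℝ | ∃ γ : E d, ∀ ω, f ω ≤ x + ⟪γ, S₁ ω - S₀⟫} with hX
  set Y : Set ℝ := {y : ℝ | (S₀, y) ∈
      intrinsicInterior ℝ (convexHull ℝ (Set.range fun ω => (S₁ ω, f ω)))} with hY
  have hpair : ∀ (μ : Ω → ℝ), ∑ ω, μ ω • ((S₁ ω, f ω) : E d × ℝ)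
      = (∑ ω, μ ω • S₁ ω, ∑ ω, μ ω * f ω) := by
    intro μ
    rw [Prod.ext_iff]
    constructor
    · rw [Prod.fst_sum]
      rfl
    · rw [Prod.snd_sum]
      rfl
  have hy₀Y : (∑ ω, l ω * f ω) ∈ Y := by
    have h := lemB (fun ω => ((S₁ ω, f ω) : E d × ℝ)) l hl0 hl1
    rw [hpair l, hlS] at h
    exact h
  have hXY : ∀ x ∈ X, ∀ y : ℝ,
      (S₀, y) ∈ convexHull ℝ (Set.range fun ω => ((S₁ ω, f ω) : E d × ℝ)) → y ≤ x := by
    rintro x ⟨γ, hγ⟩ y hy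
    obtain ⟨μ, hμ0, hμ1, hμp⟩ := (lemA _ _).1 hy
    rw [hpair μ, Prod.ext_iff] at hμp
    obtain ⟨h1, h2⟩ := hμp
    simp only at h1 h2
    have h5 : ∑ ω, μ ω • (S₁ ω - S₀) = 0 := by
      simp_rw [smul_sub]
      rw [Finset.sum_sub_distrib, h1, ← Finset.sum_smul, hμ1, one_smul, sub_self]
    calc y = ∑ ω, μ ω * f ω := h2.symm
      _ ≤ ∑ ω, μ ω * (x + ⟪γ, S₁ ω - S₀⟫) :=
        Finset.sum_le_sum fun ω _ => mul_le_mul_of_nonneg_left (hγ ω) (hμ0 ω)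
      _ = (∑ ω, μ ω) * x + ∑ ω, μ ω * ⟪γ, S₁ ω - S₀⟫ := by
        simp_rw [mul_add]
        rw [Finset.sum_add_distrib, ← Finset.sum_mul]
      _ = x + ⟪γ, ∑ ω, μ ω • (S₁ ω - S₀)⟫ := by
        rw [hμ1, one_mul, inner_sum]
        simp_rw [real_inner_smul_right]
      _ = x := by rw [h5, inner_zero_right, add_zero]
  have hx₀X : (Finset.univ.sup' Finset.univ_nonempty f) ∈ X := by
    refine ⟨0, fun ω => ?_⟩
    rw [inner_zero_left, add_zero]
    exact Finset.le_sup' f (Finset.mem_univ ω)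
  have hconvclosed : IsClosed (convexHull ℝ (Set.range fun ω => ((S₁ ω, f ω) : E d × ℝ))) :=
    ((Set.finite_range _).isCompact_convexHull ℝ).isClosed
  set T : Set ℝ := {y : ℝ | (S₀, y) ∈ convexHull ℝ (Set.range fun ω => ((S₁ ω, f ω) : E d × ℝ))}
    with hT
  have hTclosed : IsClosed T := hconvclosed.preimage (Continuous.prodMk_right S₀)
  have hYsubT : Y ⊆ T := by
    intro y hy
    simp only [hT, Set.mem_setOf_eq]
    exact intrinsicInterior_subset hy
  have hTne : T.Nonempty := ⟨_, hYsubT hy₀Y⟩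
  have hTbdd : BddAbove T := ⟨_, fun y hy => hXY _ hx₀X y hy⟩
  have hybarT : sSup T ∈ T := hTclosed.csSup_mem hTne hTbdd
  have hYne : Y.Nonempty := ⟨_, hy₀Y⟩
  have hYbdd : BddAbove Y := hTbdd.mono hYsubT
  -- sSup Y = sSup T
  have hθY : ∀ θ : ℝ, 0 < θ → θ ≤ 1 → (1-θ) * sSup T + θ * (∑ ω, l ω * f ω) ∈ Y := by
    intro θ hθ0 hθ1
    obtain ⟨μ, hμ0, hμ1, hμp⟩ := (lemA _ _).1 hybarT
    have h := lemB (fun ω => ((S₁ ω, f ω) : E d × ℝ)) (fun ω => (1-θ) * μ ω + θ * l ω)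
      (fun ω => by
        show 0 < (1-θ) * μ ω + θ * l ω
        nlinarith [mul_nonneg (by linarith : (0:ℝ) ≤ 1-θ) (hμ0 ω), mul_pos hθ0 (hl0 ω)])
      (by rw [Finset.sum_add_distrib, ← Finset.mul_sum, ← Finset.mul_sum, hμ1, hl1]; ring)
    have hcomb : ∑ ω, ((1-θ) * μ ω + θ * l ω) • ((S₁ ω, f ω) : E d × ℝ)
        = (1-θ) • ((S₀ : E d), sSup T) + θ • ((S₀ : E d), ∑ ω, l ω * f ω) := by
      simp_rw [add_smul, mul_smul]
      rw [Finset.sum_add_distrib, ← Finset.smul_sum, ← Finset.smul_sum, hμp, hpair l, hlS]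
    rw [hcomb] at h
    have : (1-θ) • ((S₀ : E d), sSup T) + θ • ((S₀ : E d), ∑ ω, l ω * f ω)
        = ((S₀ : E d), (1-θ) * sSup T + θ * (∑ ω, l ω * f ω)) := by
      rw [Prod.ext_iff]
      constructor
      · show (1-θ) • S₀ + θ • S₀ = S₀
        rw [← add_smul]; simp
      · rfl
    rw [this] at h
    exact h
  have hsupY : sSup Y = sSup T := by
    refine le_antisymm (csSup_le_csSup hTbdd hYne hYsubT) ?_
    refine le_of_forall_pos_le_add fun ε hε => ?_
    by_cases hb : sSup T ≤ ∑ ω, l ω * f ω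
    · have := le_csSup hYbdd hy₀Y
      linarith
    · push_neg at hb
      set D : ℝ := sSup T - ∑ ω, l ω * f ω with hD
      have hDpos : 0 < D := by rw [hD]; linarith
      set θ : ℝ := min 1 (ε / D) with hθ
      have hθ0 : 0 < θ := lt_min one_pos (div_pos hε hDpos)
      have hθ1 : θ ≤ 1 := min_le_left _ _
      have hmem := hθY θ hθ0 hθ1
      have hle := le_csSup hYbdd hmem
      have hθD : θ * D ≤ ε := by
        have h' : θ ≤ ε / D := min_le_right _ _
        rw [← le_div_iff₀ hDpos]
        exact h'
      have : (1-θ) * sSup T + θ * (∑ ω, l ω * f ω) = sSup T - θ * D := by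
        rw [hD]; ring
      linarith [this ▸ hle]
  -- sInf X = sSup T
  have hgeX : ∀ x ∈ X, sSup T ≤ x := fun x hx => hXY x hx _ hybarT
  have hXbdd : BddBelow X := ⟨sSup T, hgeX⟩
  have hinf_ge : sSup T ≤ sInf X := le_csInf ⟨_, hx₀X⟩ hgeX
  have hinf_le : sInf X ≤ sSup T := by
    refine le_of_forall_pos_le_add fun ε hε => ?_
    have hq : ((S₀ : E d), sSup T + ε) ∉
        convexHull ℝ (Set.range fun ω => ((S₁ ω, f ω) : E d × ℝ)) := by
      intro h
      have := le_csSup hTbdd h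
      linarith
    obtain ⟨φ, u, hu1, hu2⟩ :=
      geometric_hahn_banach_closed_point (convex_convexHull ℝ _) hconvclosed hq
    set c : ℝ := φ ((0 : E d), (1:ℝ)) with hc
    have hφ : ∀ (s : E d) (t : ℝ), φ (s, t) = φ (s, 0) + t * c := by
      intro s t
      have hst : ((s, t) : E d × ℝ) = (s, (0:ℝ)) + t • ((0 : E d), (1:ℝ)) := by
        rw [Prod.ext_iff]
        constructor
        · show s = s + t • 0; simp
        · show t = 0 + t * 1; ring
      rw [hst, map_add, map_smul, smul_eq_mul, hc]
    have hcpos : 0 < c := by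
      have h1 : φ (S₀, sSup T) < u := hu1 _ hybarT
      have h2 : u < φ (S₀, sSup T + ε) := hu2
      rw [hφ S₀ (sSup T)] at h1
      rw [hφ S₀ (sSup T + ε)] at h2
      nlinarith
    set γ : E d := (-(c⁻¹)) • ((InnerProductSpace.toDual ℝ (E d)).symm
      (φ.comp (ContinuousLinearMap.inl ℝ (E d) ℝ))) with hγdef
    have hγ : ∀ w : E d, ⟪γ, w⟫ = -(c⁻¹) * φ (w, 0) := by
      intro w
      rw [hγdef, real_inner_smul_left, InnerProductSpace.toDual_symm_apply]
      simp
    have hXmem : sSup T + ε ∈ X := by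
      refine ⟨γ, fun ω => ?_⟩
      have hω : φ (S₁ ω, f ω) < φ (S₀, sSup T + ε) :=
        lt_trans (hu1 _ (subset_convexHull ℝ _ ⟨ω, rfl⟩)) hu2
      rw [hφ (S₁ ω) (f ω), hφ S₀ (sSup T + ε)] at hω
      have hsub : ⟪γ, S₁ ω - S₀⟫ = -(c⁻¹) * (φ (S₁ ω, 0) - φ (S₀, 0)) := by
        rw [hγ (S₁ ω - S₀)]
        congr 1
        have : ((S₁ ω - S₀, (0:ℝ)) : E d × ℝ) = (S₁ ω, (0:ℝ)) - (S₀, (0:ℝ)) := by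
          rw [Prod.ext_iff]; constructor
          · rfl
          · show (0:ℝ) = 0 - 0; ring
        rw [this, map_sub]
      rw [hsub]
      rw [← sub_le_iff_le_add']
      have hexp : -(c⁻¹) * (φ (S₁ ω, 0) - φ (S₀, 0)) = (φ (S₀, 0) - φ (S₁ ω, 0)) / c := by
        field_simp; ring
      rw [hexp, le_div_iff₀ hcpos]
      nlinarith
    calc sInf X ≤ sSup T + ε := csInf_le hXbdd hXmem
      _ ≤ sSup T + ε := le_rfl
  rw [hsupY]
  exact le_antisymm hinf_le hinf_ge
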